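/- Let γ' be an arc in a proper domain G' with endpoints x', y', let z₀' ∈ γ' maximize d_{G'} over γ', and assume the cone-type estimate min{diam(γ'[x',w']), diam(γ'[y',w'])} ≤ c₂·d_{G'}(w') for all w' ∈ γ' with constant c₂ ≥ 1. Then for every z' ∈ γ'[x', z₀'] one has |x' − z'| ≤ 4c₂²·d_{G'}(z'), and symmetrically for every z' ∈ γ'[y', z₀'] one has |y' − z'| ≤ 4c₂²·d_{G'}(z'). -/

import Mathlib

open Set Metric

section Defs

variable {E : Type*} [NormedAddCommGroup E] [NormedSpace ℝ E]
variable {E' : Type*} [NormedAddCommGroup E'] [NormedSpace ℝ E']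

/-- Distance from a point to the boundary of `D`. -/
noncomputable def bdDist (D : Set E) (z : E) : ℝ := Metric.infDist z (frontier D)

/-- `γ` (with derivative `γ'`) is a rectifiable curve in `D` from `x` to `y`,
parametrized on `[0,1]`. -/
def IsCurve (D : Set E) (γ γ' : ℝ → E) (x y : E) : Prop :=
  (∀ t ∈ Icc (0:ℝ) 1, γ t ∈ D) ∧ (∀ t ∈ Icc (0:ℝ) 1, HasDerivAt γ (γ' t) t) ∧
    ContinuousOn γ' (Icc 0 1) ∧ γ 0 = x ∧ γ 1 = y

/-- Arclength of a curve between parameter values `a` and `b`. -/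
noncomputable def clen (γ' : ℝ → E) (a b : ℝ) : ℝ := ∫ t in a..b, ‖γ' t‖

/-- Quasihyperbolic length of a curve between parameter values `a` and `b`. -/
noncomputable def qhLen (D : Set E) (γ γ' : ℝ → E) (a b : ℝ) : ℝ :=
  ∫ t in a..b, ‖γ' t‖ / bdDist D (γ t)

/-- The quasihyperbolic distance in `D`. -/
noncomputable def qhDist (D : Set E) (x y : E) : ℝ :=
  sInf {l : ℝ | ∃ γ γ' : ℝ → E, IsCurve D γ γ' x y ∧ l = qhLen D γ γ' 0 1}

/-- `γ` is a `ν`-neargeodesic from `x` to `y` in `D`. -/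
def IsNeargeodesic (ν : ℝ) (D : Set E) (γ γ' : ℝ → E) (x y : E) : Prop :=
  IsCurve D γ γ' x y ∧ ∀ s t : ℝ, 0 ≤ s → s ≤ t → t ≤ 1 →
    qhLen D γ γ' s t ≤ ν * qhDist D (γ s) (γ t)

/-- `D` is a `c`-uniform domain: any two points are joined by a double `c`-cone arc. -/
def IsUniform (c : ℝ) (D : Set E) : Prop :=
  ∀ x ∈ D, ∀ y ∈ D, ∃ γ γ' : ℝ → E, IsCurve D γ γ' x y ∧
    (∀ t ∈ Icc (0:ℝ) 1, min (clen γ' 0 t) (clen γ' t 1) ≤ c * bdDist D (γ t)) ∧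
    clen γ' 0 1 ≤ c * ‖x - y‖

/-- `f` is `C`-coarsely `M`-quasihyperbolic from `D` to `D'`. -/
def IsCQH (M C : ℝ) (D : Set E) (D' : Set E') (f : E → E') : Prop :=
  ∀ x ∈ D, ∀ y ∈ D,
    (qhDist D x y - C) / M ≤ qhDist D' (f x) (f y) ∧
      qhDist D' (f x) (f y) ≤ M * qhDist D x y + C

/-- `f` is a homeomorphism of `S` onto `S'`. -/
def IsHomeoOn (f : E → E') (S : Set E) (S' : Set E') : Prop :=
  ContinuousOn f S ∧ InjOn f S ∧ f '' S = S' ∧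
    ∃ g : E' → E, ContinuousOn g S' ∧ ∀ x ∈ S, g (f x) = x

/-- The cross ratio of a quadruple. -/
noncomputable def crossRatio (a b c d : E) : ℝ :=
  (dist a b / dist a c) * (dist c d / dist b d)

/-- `F` is `η`-quasimöbius relative to `∂D` (on the closure of `D`). -/
def IsQMRelBoundary (η : ℝ → ℝ) (D : Set E) (F : E → E') : Prop :=
  ∀ a b c d : E, a ∈ closure D → b ∈ closure D → c ∈ closure D → d ∈ closure D →
    a ≠ b → a ≠ c → a ≠ d → b ≠ c → b ≠ d → c ≠ d →
    ((a ∈ frontier D ∧ d ∈ frontier D) ∨ (b ∈ frontier D ∧ c ∈ frontier D)) →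
    crossRatio (F a) (F b) (F c) (F d) ≤ η (crossRatio a b c d)

/-- `η` is a self-homeomorphism of `[0,∞)` (a distortion gauge). -/
def IsGauge (η : ℝ → ℝ) : Prop :=
  StrictMonoOn η (Ici 0) ∧ ContinuousOn η (Ici 0) ∧ η 0 = 0 ∧ SurjOn η (Ici 0) (Ici 0)

end Defs


section AuxLemmas

variable {E : Type*} [NormedAddCommGroup E] [NormedSpace ℝ E]

omit [NormedSpace ℝ E] in
lemma stmt6_split (γ : ℝ → E) (hcont : ContinuousOn γ (Icc 0 1))
    (t₀ : ℝ) (ht₀ : t₀ ∈ Icc (0:ℝ) 1) (D : ℝ) (hD : 0 ≤ D)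
    (h : ∀ w ∈ Icc (0:ℝ) t₀,
      min (Metric.diam (γ '' Icc 0 w)) (Metric.diam (γ '' Icc w 1)) ≤ D) :
    Metric.diam (γ '' Icc 0 t₀) ≤ 2 * D := by
  have hbd : ∀ a b : ℝ, 0 ≤ a → b ≤ 1 → Bornology.IsBounded (γ '' Icc a b) := by
    intro a b ha hb
    exact ((isCompact_Icc.image_of_continuousOn
      (hcont.mono (Icc_subset_Icc ha hb)))).isBounded
  set B : Set ℝ := {w ∈ Icc (0:ℝ) t₀ | Metric.diam (γ '' Icc w 1) ≤ D} with hBdef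
  by_cases hBne : B.Nonempty
  · set w₀ := sInf B with hw₀def
    have hBbdd : BddBelow B := ⟨0, fun b hb => hb.1.1⟩
    have hw0 : 0 ≤ w₀ := le_csInf hBne (fun b hb => hb.1.1)
    have hwt : w₀ ≤ t₀ := by
      obtain ⟨b, hb⟩ := hBne
      exact (csInf_le hBbdd hb).trans hb.1.2
    have hw1 : w₀ ≤ 1 := hwt.trans ht₀.2
    -- left bound
    have dL : Metric.diam (γ '' Icc 0 w₀) ≤ D := by
      rcases eq_or_lt_of_le hw0 with heq | hlt
      · rw [← heq, Icc_self, image_singleton, diam_singleton]; exact hD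
      · have hIco : ∀ x ∈ γ '' Ico 0 w₀, ∀ y ∈ γ '' Ico 0 w₀, dist x y ≤ D := by
          rintro _ ⟨u, hu, rfl⟩ _ ⟨v, hv, rfl⟩
          set w := max u v with hwdef
          have hwlt : w < w₀ := max_lt hu.2 hv.2
          have hwmem : w ∈ Icc (0:ℝ) t₀ := ⟨le_max_of_le_left hu.1, hwlt.le.trans hwt⟩
          have hwB : w ∉ B := fun hmem => absurd (csInf_le hBbdd hmem) (not_le.2 hwlt)
          have hmin := h w hwmem
          rcases min_le_iff.mp hmin with h1 | h1
          · have hdist : dist (γ u) (γ v) ≤ Metric.diam (γ '' Icc 0 w) := by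
              refine dist_le_diam_of_mem (hbd 0 w le_rfl (hwlt.le.trans hw1)) ?_ ?_
              · exact ⟨u, ⟨hu.1, le_max_left _ _⟩, rfl⟩
              · exact ⟨v, ⟨hv.1, le_max_right _ _⟩, rfl⟩
            exact hdist.trans h1
          · exact absurd h1 (fun hle => hwB ⟨hwmem, hle⟩)
        have hclos : γ '' Icc 0 w₀ ⊆ closure (γ '' Ico 0 w₀) := by
          rintro _ ⟨t, ht, rfl⟩
          have htc : t ∈ closure (Ico 0 w₀) := by
            rw [closure_Ico (ne_of_lt hlt)]; exact ht
          have hcw : ContinuousWithinAt γ (Ico 0 w₀) t :=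
            (hcont t ⟨ht.1, ht.2.trans hw1⟩).mono (Ico_subset_Icc_self.trans
              (Icc_subset_Icc le_rfl hw1))
          exact hcw.mem_closure_image htc
        calc Metric.diam (γ '' Icc 0 w₀)
            ≤ Metric.diam (closure (γ '' Ico 0 w₀)) := by
              refine diam_mono hclos ?_
              exact ((hbd 0 w₀ le_rfl hw1).subset
                (image_mono (f := γ) Ico_subset_Icc_self)).closure
          _ = Metric.diam (γ '' Ico 0 w₀) := diam_closure _
          _ ≤ D := diam_le_of_forall_dist_le hD hIco
    -- right bound
    have dR : Metric.diam (γ '' Icc w₀ 1) ≤ D := by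
      rcases eq_or_lt_of_le hw1 with heq | hlt
      · rw [heq, Icc_self, image_singleton, diam_singleton]; exact hD
      · have hIoc : ∀ x ∈ γ '' Ioc w₀ 1, ∀ y ∈ γ '' Ioc w₀ 1, dist x y ≤ D := by
          rintro _ ⟨u, hu, rfl⟩ _ ⟨v, hv, rfl⟩
          have hm : w₀ < min u v := lt_min hu.1 hv.1
          obtain ⟨w, hwB, hwlt⟩ := exists_lt_of_csInf_lt hBne hm
          have hdist : dist (γ u) (γ v) ≤ Metric.diam (γ '' Icc w 1) := by
            refine dist_le_diam_of_mem (hbd w 1 hwB.1.1 le_rfl) ?_ ?_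
            · exact ⟨u, ⟨(le_trans hwlt.le (min_le_left _ _)), hu.2⟩, rfl⟩
            · exact ⟨v, ⟨(le_trans hwlt.le (min_le_right _ _)), hv.2⟩, rfl⟩
          exact hdist.trans hwB.2
        have hclos : γ '' Icc w₀ 1 ⊆ closure (γ '' Ioc w₀ 1) := by
          rintro _ ⟨t, ht, rfl⟩
          have htc : t ∈ closure (Ioc w₀ 1) := by
            rw [closure_Ioc (ne_of_lt hlt)]; exact ht
          have hcw : ContinuousWithinAt γ (Ioc w₀ 1) t :=
            (hcont t ⟨hw0.trans ht.1, ht.2⟩).mono (Ioc_subset_Icc_self.trans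
              (Icc_subset_Icc hw0 le_rfl))
          exact hcw.mem_closure_image htc
        calc Metric.diam (γ '' Icc w₀ 1)
            ≤ Metric.diam (closure (γ '' Ioc w₀ 1)) := by
              refine diam_mono hclos ?_
              exact ((hbd w₀ 1 hw0 le_rfl).subset
                (image_mono (f := γ) Ioc_subset_Icc_self)).closure
          _ = Metric.diam (γ '' Ioc w₀ 1) := diam_closure _
          _ ≤ D := diam_le_of_forall_dist_le hD hIoc
    -- combine
    have hsub : γ '' Icc 0 t₀ ⊆ γ '' Icc 0 w₀ ∪ γ '' Icc w₀ 1 := by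
      rintro _ ⟨t, ht, rfl⟩
      rcases le_total t w₀ with hle | hle
      · exact Or.inl ⟨t, ⟨ht.1, hle⟩, rfl⟩
      · exact Or.inr ⟨t, ⟨hle, ht.2.trans ht₀.2⟩, rfl⟩
    have hx0 : γ w₀ ∈ γ '' Icc 0 w₀ := ⟨w₀, ⟨hw0, le_rfl⟩, rfl⟩
    have hx1 : γ w₀ ∈ γ '' Icc w₀ 1 := ⟨w₀, ⟨le_rfl, hw1⟩, rfl⟩
    calc Metric.diam (γ '' Icc 0 t₀)
        ≤ Metric.diam (γ '' Icc 0 w₀ ∪ γ '' Icc w₀ 1) := by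
          refine diam_mono hsub ?_
          exact (hbd 0 w₀ le_rfl hw1).union (hbd w₀ 1 hw0 le_rfl)
      _ ≤ Metric.diam (γ '' Icc 0 w₀) + Metric.diam (γ '' Icc w₀ 1) :=
          diam_union' ⟨γ w₀, hx0, hx1⟩
      _ ≤ 2 * D := by linarith
  · have ht₀B : t₀ ∉ B := fun h => hBne ⟨t₀, h⟩
    have hmin := h t₀ ⟨ht₀.1, le_rfl⟩
    rcases min_le_iff.mp hmin with h1 | h1
    · linarith
    · exact absurd h1 (fun hle => ht₀B ⟨⟨ht₀.1, le_rfl⟩, hle⟩)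

omit [NormedSpace ℝ E] in
lemma stmt6_aux (G' : Set E) (γ : ℝ → E) (hcont : ContinuousOn γ (Icc 0 1))
    (t₀ : ℝ) (ht₀ : t₀ ∈ Icc (0:ℝ) 1)
    (hmax : ∀ t ∈ Icc (0:ℝ) 1, bdDist G' (γ t) ≤ bdDist G' (γ t₀))
    (c₂ : ℝ) (hc₂ : 1 ≤ c₂)
    (hcone : ∀ w ∈ Icc (0:ℝ) 1,
      min (Metric.diam (γ '' Icc 0 w)) (Metric.diam (γ '' Icc w 1)) ≤ c₂ * bdDist G' (γ w)) :
    ∀ s ∈ Icc (0:ℝ) t₀, dist (γ 0) (γ s) ≤ 4 * c₂ ^ 2 * bdDist G' (γ s) := by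
  have hbd : ∀ a b : ℝ, 0 ≤ a → b ≤ 1 → Bornology.IsBounded (γ '' Icc a b) := by
    intro a b ha hb
    exact ((isCompact_Icc.image_of_continuousOn
      (hcont.mono (Icc_subset_Icc ha hb)))).isBounded
  intro s hs
  have hs1 : s ∈ Icc (0:ℝ) 1 := ⟨hs.1, hs.2.trans ht₀.2⟩
  have hds : (0:ℝ) ≤ bdDist G' (γ s) := Metric.infDist_nonneg
  have hdt : (0:ℝ) ≤ bdDist G' (γ t₀) := Metric.infDist_nonneg
  have hc0 : (0:ℝ) < c₂ := lt_of_lt_of_le one_pos hc₂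
  have hD : (0:ℝ) ≤ c₂ * bdDist G' (γ t₀) := mul_nonneg hc0.le hdt
  have hsplit : Metric.diam (γ '' Icc 0 t₀) ≤ 2 * (c₂ * bdDist G' (γ t₀)) := by
    refine stmt6_split γ hcont t₀ ht₀ _ hD ?_
    intro w hw
    refine (hcone w ⟨hw.1, hw.2.trans ht₀.2⟩).trans ?_
    exact mul_le_mul_of_nonneg_left (hmax w ⟨hw.1, hw.2.trans ht₀.2⟩) hc0.le
  rcases min_le_iff.mp (hcone s hs1) with h1 | h1
  · have h2 : dist (γ 0) (γ s) ≤ Metric.diam (γ '' Icc 0 s) :=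
      dist_le_diam_of_mem (hbd 0 s le_rfl hs1.2) ⟨0, ⟨le_rfl, hs.1⟩, rfl⟩
        ⟨s, ⟨hs.1, le_rfl⟩, rfl⟩
    nlinarith [mul_nonneg (by linarith : (0:ℝ) ≤ 4*c₂-1) (mul_nonneg hc0.le hds)]
  · have h2 : dist (γ t₀) (γ s) ≤ Metric.diam (γ '' Icc s 1) :=
      dist_le_diam_of_mem (hbd s 1 hs.1 le_rfl) ⟨t₀, ⟨hs.2, ht₀.2⟩, rfl⟩
        ⟨s, ⟨le_rfl, hs1.2⟩, rfl⟩
    have h3 : bdDist G' (γ t₀) ≤ bdDist G' (γ s) + dist (γ t₀) (γ s) :=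
      Metric.infDist_le_infDist_add_dist
    have h4 : dist (γ 0) (γ s) ≤ Metric.diam (γ '' Icc 0 t₀) :=
      dist_le_diam_of_mem (hbd 0 t₀ le_rfl ht₀.2) ⟨0, ⟨le_rfl, ht₀.1⟩, rfl⟩ ⟨s, hs, rfl⟩
    nlinarith [mul_nonneg (mul_nonneg hc0.le hc0.le) hds, mul_nonneg hc0.le hds,
      mul_le_mul_of_nonneg_left h3 (by positivity : (0:ℝ) ≤ 2*c₂),
      mul_le_mul_of_nonneg_left h1 (by positivity : (0:ℝ) ≤ 2*c₂)]

end AuxLemmas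

/-- Lemma 2.11(1): for an arc `γ` in a proper domain `G'` with endpoints
`x' = γ(0)`, `y' = γ(1)` satisfying the cone-type diameter estimate with constant `c₂ ≥ 1`, and
`z₀' = γ(t₀)` maximizing the distance to the boundary over `γ`: every `z' = γ(s)` with
`s ∈ [0, t₀]` satisfies `|x' - z'| ≤ 4c₂²·d_{G'}(z')`, and every `z' = γ(s)` with
`s ∈ [t₀, 1]` satisfies `|y' - z'| ≤ 4c₂²·d_{G'}(z')`. -/
theorem stmt6 {E : Type*} [NormedAddCommGroup E] [NormedSpace ℝ E] [CompleteSpace E]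
    (G' : Set E) (hGopen : IsOpen G') (hGconn : IsConnected G') (hGproper : G' ≠ univ)
    (γ : ℝ → E) (hcont : ContinuousOn γ (Icc 0 1)) (hinj : InjOn γ (Icc 0 1))
    (hmem : ∀ t ∈ Icc (0:ℝ) 1, γ t ∈ G')
    (x' y' : E) (hx : γ 0 = x') (hy : γ 1 = y')
    (t₀ : ℝ) (ht₀ : t₀ ∈ Icc (0:ℝ) 1)
    (hmax : ∀ t ∈ Icc (0:ℝ) 1, bdDist G' (γ t) ≤ bdDist G' (γ t₀))
    (c₂ : ℝ) (hc₂ : 1 ≤ c₂)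
    (hcone : ∀ w ∈ Icc (0:ℝ) 1,
      min (Metric.diam (γ '' Icc 0 w)) (Metric.diam (γ '' Icc w 1)) ≤ c₂ * bdDist G' (γ w)) :
    (∀ s ∈ Icc (0:ℝ) t₀, dist x' (γ s) ≤ 4 * c₂ ^ 2 * bdDist G' (γ s)) ∧
    (∀ s ∈ Icc t₀ (1:ℝ), dist y' (γ s) ≤ 4 * c₂ ^ 2 * bdDist G' (γ s)) := by
  constructor
  · intro s hs
    rw [← hx]
    exact stmt6_aux G' γ hcont t₀ ht₀ hmax c₂ hc₂ hcone s hs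
  · set δ : ℝ → E := fun t => γ (1 - t) with hδ
    have hmapsto : ∀ t ∈ Icc (0:ℝ) 1, 1 - t ∈ Icc (0:ℝ) 1 := fun t ht =>
      ⟨by linarith [ht.2], by linarith [ht.1]⟩
    have hcontδ : ContinuousOn δ (Icc 0 1) :=
      hcont.comp ((continuous_const.sub continuous_id).continuousOn) hmapsto
    have him : ∀ a b : ℝ, δ '' Icc a b = γ '' Icc (1-b) (1-a) := by
      intro a b
      have h1 : δ '' Icc a b = (γ ∘ fun t => 1 - t) '' Icc a b := rfl
      rw [h1, image_comp, Set.image_const_sub_Icc]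
    have ht₀δ : 1 - t₀ ∈ Icc (0:ℝ) 1 := hmapsto t₀ ht₀
    have hmaxδ : ∀ t ∈ Icc (0:ℝ) 1, bdDist G' (δ t) ≤ bdDist G' (δ (1 - t₀)) := by
      intro t ht
      show bdDist G' (γ (1 - t)) ≤ bdDist G' (γ (1 - (1 - t₀)))
      rw [sub_sub_cancel]
      exact hmax (1 - t) (hmapsto t ht)
    have hconeδ : ∀ w ∈ Icc (0:ℝ) 1,
        min (Metric.diam (δ '' Icc 0 w)) (Metric.diam (δ '' Icc w 1))
          ≤ c₂ * bdDist G' (δ w) := by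
      intro w hw
      rw [him 0 w, him w 1, sub_zero, sub_self, min_comm]
      exact hcone (1 - w) (hmapsto w hw)
    have key := stmt6_aux G' δ hcontδ (1 - t₀) ht₀δ hmaxδ c₂ hc₂ hconeδ
    intro s hs
    have hsδ : 1 - s ∈ Icc (0:ℝ) (1 - t₀) := ⟨by linarith [hs.2], by linarith [hs.1]⟩
    have h := key (1 - s) hsδ
    simp only [hδ, sub_zero, sub_sub_cancel, hy] at h
    exact h
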